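/- Let θ_OLS = E[ΔΔ']⁻¹E[Δp] be the population OLS estimand where p = Δ*'θ₀ + ω₀ and Δ is a random 2-vector with E[ΔΔ'] positive definite. Define Δ_OLS = Δ'θ_OLS and hₘ = E[Δ(p − Δ'θₘ)]. Then h₁'W h₁ − h₂'W h₂ with W = E[ΔΔ']⁻¹ equals E[(Δ_OLS − Δ'θ₁)²] − E[(Δ_OLS − Δ'θ₂)²], i.e., RSS-based model comparison asymptotically compares distances of each model's markups to the OLS-projected markups. -/

import Mathlib

open MeasureTheory Matrix

lemma aux_int_mul {Ω : Type*} [MeasurableSpace Ω] {μ : Measure Ω} {f g : Ω → ℝ}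
    (hf : MemLp f 2 μ) (hg : MemLp g 2 μ) : Integrable (fun ω => f ω * g ω) μ := by
  rw [← memLp_one_iff_integrable]
  have : (fun ω => f ω * g ω) = f • g := rfl
  rw [this]
  exact hg.smul hf

/-- With `θ_OLS = E[ΔΔ']⁻¹E[Δp]`, `Δ_OLS = Δ'θ_OLS` and OLS moments
`hₘ = E[Δ(p − Δ'θₘ)]`, the weighted difference `h₁'Wh₁ − h₂'Wh₂` with
`W = E[ΔΔ']⁻¹` equals `E[(Δ_OLS − Δ'θ₁)²] − E[(Δ_OLS − Δ'θ₂)²]`. -/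
theorem stmt_13 {Ω : Type*} [MeasurableSpace Ω] (μ : Measure Ω) [IsProbabilityMeasure μ]
    (Δ : Ω → Fin 2 → ℝ) (p : Ω → ℝ)
    (hΔmem : ∀ k, MemLp (fun ω => Δ ω k) 2 μ) (hpmem : MemLp p 2 μ)
    (EΔΔ : Matrix (Fin 2) (Fin 2) ℝ)
    (hEΔΔ : EΔΔ = Matrix.of fun i j => ∫ ω, Δ ω i * Δ ω j ∂μ)
    (hpos : EΔΔ.PosDef)
    (θOLS : Fin 2 → ℝ)
    (hθOLS : θOLS = EΔΔ⁻¹ *ᵥ fun i => ∫ ω, Δ ω i * p ω ∂μ)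
    (ΔOLS : Ω → ℝ) (hΔOLS : ΔOLS = fun ω => Δ ω ⬝ᵥ θOLS)
    (θ₁ θ₂ : Fin 2 → ℝ)
    (h₁ h₂ : Fin 2 → ℝ)
    (hh₁ : h₁ = fun i => ∫ ω, Δ ω i * (p ω - Δ ω ⬝ᵥ θ₁) ∂μ)
    (hh₂ : h₂ = fun i => ∫ ω, Δ ω i * (p ω - Δ ω ⬝ᵥ θ₂) ∂μ) :
    h₁ ⬝ᵥ (EΔΔ⁻¹ *ᵥ h₁) - h₂ ⬝ᵥ (EΔΔ⁻¹ *ᵥ h₂) =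
      (∫ ω, (ΔOLS ω - Δ ω ⬝ᵥ θ₁) ^ 2 ∂μ) - (∫ ω, (ΔOLS ω - Δ ω ⬝ᵥ θ₂) ^ 2 ∂μ) := by
  -- basic integrability
  have intΔΔ : ∀ i j, Integrable (fun ω => Δ ω i * Δ ω j) μ :=
    fun i j => aux_int_mul (hΔmem i) (hΔmem j)
  have intΔp : ∀ i, Integrable (fun ω => Δ ω i * p ω) μ :=
    fun i => aux_int_mul (hΔmem i) hpmem
  -- determinant nonzero
  have hdet : IsUnit EΔΔ.det := isUnit_iff_ne_zero.mpr hpos.det_pos.ne'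
  have hAinvA : EΔΔ⁻¹ * EΔΔ = 1 := Matrix.nonsing_inv_mul EΔΔ hdet
  have hAAinv : EΔΔ * EΔΔ⁻¹ = 1 := Matrix.mul_nonsing_inv EΔΔ hdet
  set b : Fin 2 → ℝ := fun i => ∫ ω, Δ ω i * p ω ∂μ with hb
  -- A *ᵥ θOLS = b
  have hAθ : EΔΔ *ᵥ θOLS = b := by
    rw [hθOLS, Matrix.mulVec_mulVec, hAAinv, Matrix.one_mulVec]
  -- h_m = A *ᵥ (θOLS - θ_m)
  have hmom : ∀ θ : Fin 2 → ℝ,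
      (fun i => ∫ ω, Δ ω i * (p ω - Δ ω ⬝ᵥ θ) ∂μ) = EΔΔ *ᵥ (θOLS - θ) := by
    intro θ
    rw [Matrix.mulVec_sub, hAθ]
    funext i
    have heq : (fun ω => Δ ω i * (p ω - Δ ω ⬝ᵥ θ)) =
        fun ω => Δ ω i * p ω - ((Δ ω i * Δ ω 0) * θ 0 + (Δ ω i * Δ ω 1) * θ 1) := by
      funext ω
      simp only [dotProduct, Fin.sum_univ_two]
      ring
    have h3 : Integrable (fun ω => Δ ω i * Δ ω 0 * θ 0) μ := (intΔΔ i 0).mul_const (θ 0)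
    have h4 : Integrable (fun ω => Δ ω i * Δ ω 1 * θ 1) μ := (intΔΔ i 1).mul_const (θ 1)
    have h34 : Integrable (fun ω => Δ ω i * Δ ω 0 * θ 0 + Δ ω i * Δ ω 1 * θ 1) μ := h3.add h4
    rw [heq]
    simp only [integral_sub (intΔp i) h34, integral_add h3 h4, integral_mul_const]
    simp only [Pi.sub_apply, Matrix.mulVec, dotProduct, Fin.sum_univ_two, hEΔΔ,
      Matrix.of_apply, hb]
    try ring
  -- E[(Δ ⬝ᵥ v)^2] = v ⬝ᵥ A *ᵥ v
  have hsq : ∀ v : Fin 2 → ℝ,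
      (∫ ω, (Δ ω ⬝ᵥ v) ^ 2 ∂μ) = v ⬝ᵥ (EΔΔ *ᵥ v) := by
    intro v
    have heq : (fun ω => (Δ ω ⬝ᵥ v) ^ 2) =
        fun ω => ((Δ ω 0 * Δ ω 0) * (v 0 * v 0) + (Δ ω 0 * Δ ω 1) * (2 * v 0 * v 1)) +
          (Δ ω 1 * Δ ω 1) * (v 1 * v 1) := by
      funext ω
      simp only [dotProduct, Fin.sum_univ_two]
      ring
    have h3 : Integrable (fun ω => Δ ω 0 * Δ ω 0 * (v 0 * v 0)) μ :=
      (intΔΔ 0 0).mul_const _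
    have h4 : Integrable (fun ω => Δ ω 0 * Δ ω 1 * (2 * v 0 * v 1)) μ :=
      (intΔΔ 0 1).mul_const _
    have h5 : Integrable (fun ω => Δ ω 1 * Δ ω 1 * (v 1 * v 1)) μ :=
      (intΔΔ 1 1).mul_const _
    have h34 : Integrable
        (fun ω => Δ ω 0 * Δ ω 0 * (v 0 * v 0) + Δ ω 0 * Δ ω 1 * (2 * v 0 * v 1)) μ := h3.add h4
    rw [heq]
    simp only [integral_add h34 h5, integral_add h3 h4, integral_mul_const]
    have hsym : (∫ ω, Δ ω 1 * Δ ω 0 ∂μ) = ∫ ω, Δ ω 0 * Δ ω 1 ∂μ := by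
      congr 1; funext ω; ring
    simp only [dotProduct, Matrix.mulVec, Fin.sum_univ_two, hEΔΔ, Matrix.of_apply, hsym]
    ring
  -- per-model identity
  have key : ∀ θ : Fin 2 → ℝ,
      (EΔΔ *ᵥ (θOLS - θ)) ⬝ᵥ (EΔΔ⁻¹ *ᵥ (EΔΔ *ᵥ (θOLS - θ))) =
        ∫ ω, (ΔOLS ω - Δ ω ⬝ᵥ θ) ^ 2 ∂μ := by
    intro θ
    have h1 : EΔΔ⁻¹ *ᵥ (EΔΔ *ᵥ (θOLS - θ)) = θOLS - θ := by
      rw [Matrix.mulVec_mulVec, hAinvA, Matrix.one_mulVec]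
    have h2 : (fun ω => (ΔOLS ω - Δ ω ⬝ᵥ θ) ^ 2) =
        fun ω => (Δ ω ⬝ᵥ (θOLS - θ)) ^ 2 := by
      funext ω
      rw [hΔOLS, dotProduct_sub]
    rw [h1, h2, hsq, dotProduct_comm]
  rw [hh₁, hh₂, hmom θ₁, hmom θ₂, key θ₁, key θ₂]
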